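/- Let H(z1, z2) = (1 − z1)(1 − z2)(3 e^{z1 + z2} + 1). Then for all (z1, z2) ∈ [−3, 0]^2 one has 4 = H(0, 0) ≤ H(z1, z2) ≤ H(−3, −3) = 16(1 + 3 e^{−6}). -/

import Mathlib

open Real Set

/-- Derivative of `h s = 3 + 3 s - (3 - s) e^s`. -/
lemma H_aux_hasDeriv1 (x : ℝ) :
    HasDerivAt (fun s : ℝ => 3 + 3 * s - (3 - s) * Real.exp s)
      (3 - (2 - x) * Real.exp x) x := by
  have h1 : HasDerivAt (fun s : ℝ => 3 + 3 * s) 3 x := by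
    simpa using ((hasDerivAt_id x).const_mul (3:ℝ)).const_add (3:ℝ)
  have h2 : HasDerivAt (fun s : ℝ => (3 - s) * Real.exp s)
      ((0 - 1) * Real.exp x + (3 - x) * Real.exp x) x :=
    ((hasDerivAt_const x (3:ℝ)).sub (hasDerivAt_id x)).mul (Real.hasDerivAt_exp x)
  exact (h1.fun_sub h2).congr_deriv (by ring)

/-- Key one-dimensional estimate for the lower bound. -/
lemma H_aux1 (s : ℝ) (hs : 0 ≤ s) : (3 - s) * Real.exp s ≤ 3 + 3 * s := by
  have hmono : Monotone (fun s : ℝ => 3 + 3 * s - (3 - s) * Real.exp s) := by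
    apply monotone_of_deriv_nonneg
    · exact fun x => (H_aux_hasDeriv1 x).differentiableAt
    · intro x
      rw [(H_aux_hasDeriv1 x).deriv]
      have hA : (2 - x) ≤ Real.exp (1 - x) := by
        have := Real.add_one_le_exp (1 - x)
        linarith
      have hB : Real.exp (1 - x) * Real.exp x = Real.exp 1 := by
        rw [← Real.exp_add]; ring_nf
      have hC : Real.exp 1 < 2.7182818286 := Real.exp_one_lt_d9
      nlinarith [Real.exp_pos x, mul_le_mul_of_nonneg_right hA (Real.exp_pos x).le]
  have h0 := hmono hs
  simp only [mul_zero, add_zero, sub_zero, Real.exp_zero, mul_one] at h0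
  linarith

/-- Derivative of `g x = (2 - x)^2 (3 e^x + 1)`. -/
lemma H_aux_hasDeriv2 (x : ℝ) :
    HasDerivAt (fun t : ℝ => (2 - t) ^ 2 * (3 * Real.exp t + 1))
      ((2 - x) * (-3 * x * Real.exp x - 2)) x := by
  have h1 : HasDerivAt (fun t : ℝ => (2 - t) ^ 2) (2 * (2 - x) * (0 - 1)) x := by
    have := ((hasDerivAt_const x (2:ℝ)).fun_sub (hasDerivAt_id x)).fun_pow 2
    simpa using this
  have h2 : HasDerivAt (fun t : ℝ => 3 * Real.exp t + 1) (3 * Real.exp x) x := by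
    simpa using ((Real.hasDerivAt_exp x).const_mul (3:ℝ)).add_const (1:ℝ)
  have := h1.fun_mul h2
  exact this.congr_deriv (by ring)

/-- Key one-dimensional estimate for the upper bound. -/
lemma H_aux2 (t : ℝ) (ht : t ∈ Set.Icc (-6 : ℝ) 0) :
    (2 - t) ^ 2 * (3 * Real.exp t + 1) ≤ 64 + 192 * Real.exp (-6) := by
  have hanti : AntitoneOn (fun t : ℝ => (2 - t) ^ 2 * (3 * Real.exp t + 1))
      (Set.Iic (0 : ℝ)) := by
    apply antitoneOn_of_deriv_nonpos (convex_Iic 0)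
    · exact (Continuous.continuousOn (by continuity))
    · intro x hx
      exact (H_aux_hasDeriv2 x).differentiableAt.differentiableWithinAt
    · intro x hx
      rw [interior_Iic] at hx
      rw [(H_aux_hasDeriv2 x).deriv]
      have hx0 : x < 0 := hx
      -- need: -3 x e^x ≤ 3/e < 2, i.e. (-x) e^x ≤ e^{-1}
      have hA : -x ≤ Real.exp (-x - 1) := by
        have := Real.add_one_le_exp (-x - 1)
        linarith
      have hB : Real.exp (-x - 1) * Real.exp x = Real.exp (-1) := by
        rw [← Real.exp_add]; ring_nf
      have hC : Real.exp (-1) * Real.exp 1 = 1 := by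
        rw [← Real.exp_add]; simp
      have hD : (2.7182818283 : ℝ) < Real.exp 1 := Real.exp_one_gt_d9
      have hE : 3 * Real.exp (-1) < 2 := by nlinarith [Real.exp_pos (-1)]
      have hF : -x * Real.exp x ≤ Real.exp (-1) := by
        calc -x * Real.exp x ≤ Real.exp (-x - 1) * Real.exp x :=
              mul_le_mul_of_nonneg_right hA (Real.exp_pos x).le
          _ = Real.exp (-1) := hB
      have hG : -3 * x * Real.exp x - 2 < 0 := by nlinarith
      nlinarith [mul_pos (by linarith : (0:ℝ) < 2 - x) (by linarith : (0:ℝ) < -(-3 * x * Real.exp x - 2))]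
  have h6 := hanti (show (-6:ℝ) ∈ Set.Iic (0:ℝ) by norm_num)
    (show t ∈ Set.Iic (0:ℝ) from ht.2) ht.1
  simp only at h6
  nlinarith [h6]

/-- Extremal bounds for `H(z1,z2) = (1-z1)(1-z2)(3 e^{z1+z2} + 1)` on `[-3,0]^2`. -/
theorem H_bounds_FIE
    (z1 z2 : ℝ) (h1 : z1 ∈ Set.Icc (-3 : ℝ) 0) (h2 : z2 ∈ Set.Icc (-3 : ℝ) 0) :
    (1 - (0:ℝ)) * (1 - (0:ℝ)) * (3 * Real.exp (0 + 0) + 1) = 4 ∧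
    (1 - (-3:ℝ)) * (1 - (-3:ℝ)) * (3 * Real.exp ((-3) + (-3)) + 1)
      = 16 * (1 + 3 * Real.exp (-6)) ∧
    4 ≤ (1 - z1) * (1 - z2) * (3 * Real.exp (z1 + z2) + 1) ∧
    (1 - z1) * (1 - z2) * (3 * Real.exp (z1 + z2) + 1)
      ≤ 16 * (1 + 3 * Real.exp (-6)) := by
  obtain ⟨h1a, h1b⟩ := h1
  obtain ⟨h2a, h2b⟩ := h2
  refine ⟨by norm_num, by norm_num [show ((-3:ℝ)) + (-3) = -6 by norm_num]; ring, ?_, ?_⟩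
  · -- lower bound
    set t := z1 + z2 with htdef
    have ht0 : t ≤ 0 := by simp [htdef]; linarith
    have hE : Real.exp (-t) * Real.exp t = 1 := by
      rw [← Real.exp_add]; simp
    have key := H_aux1 (-t) (by linarith)
    -- (3 + t) * exp (-t) ≤ 3 - 3 t, multiply by exp t > 0 :
    have key2 : 3 + t ≤ (3 - 3 * t) * Real.exp t := by
      nlinarith [Real.exp_pos t, Real.exp_pos (-t),
        mul_le_mul_of_nonneg_right key (Real.exp_pos t).le]
    have hP : 1 - t ≤ (1 - z1) * (1 - z2) := by nlinarith
    have hQ : (0:ℝ) < 3 * Real.exp t + 1 := by positivity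
    have h4 : 4 ≤ (1 - t) * (3 * Real.exp t + 1) := by nlinarith
    nlinarith [mul_le_mul_of_nonneg_right hP hQ.le]
  · -- upper bound
    set t := z1 + z2 with htdef
    have ht : t ∈ Set.Icc (-6:ℝ) 0 := ⟨by simp [htdef]; linarith, by simp [htdef]; linarith⟩
    clear_value t
    have key := H_aux2 t ht
    have hP : (1 - z1) * (1 - z2) ≤ (2 - t) ^ 2 / 4 := by nlinarith [sq_nonneg (z1 - z2)]
    have hQ : (0:ℝ) < 3 * Real.exp t + 1 := by positivity
    have h2' := mul_le_mul_of_nonneg_right hP hQ.le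
    nlinarith [h2', key]
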